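/- Let m be a basic probability assignment on a finite set Θ of cardinality n with k_Bel < 1. Then the intersection probability is the convex combination, with coefficient β[Bel], of the barycentres of the lower and upper simplices: for every y ∈ Θ, p[Bel](y) = β[Bel]·( (1/n)·∑_{x∈Θ} t^{n−1}_x(y) ) + (1 − β[Bel])·( (1/n)·∑_{x∈Θ} t¹_x(y) ). -/
import Mathlib


open Finset

/-- A basic probability assignment on a finite set `Θ`. -/
def IsBPA {Θ : Type*} [Fintype Θ] (m : Finset Θ → ℝ) : Prop :=
  m ∅ = 0 ∧ (∀ A, 0 ≤ m A) ∧ (∑ A : Finset Θ, m A) = 1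

/-- Belief function `Bel(A) = ∑_{B ⊆ A} m(B)`. -/
noncomputable def Bel {Θ : Type*} [Fintype Θ] [DecidableEq Θ] (m : Finset Θ → ℝ)
    (A : Finset Θ) : ℝ :=
  ∑ B ∈ A.powerset, m B

/-- Plausibility function `Pl(A) = ∑_{B ∩ A ≠ ∅} m(B)`. -/
noncomputable def Pl {Θ : Type*} [Fintype Θ] [DecidableEq Θ] (m : Finset Θ → ℝ)
    (A : Finset Θ) : ℝ :=
  ∑ B ∈ Finset.univ.filter (fun B => B ∩ A ≠ ∅), m B

/-- Total mass of singletons `k_Bel`. -/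
noncomputable def kBel {Θ : Type*} [Fintype Θ] (m : Finset Θ → ℝ) : ℝ :=
  ∑ x : Θ, m {x}

/-- Total plausibility of singletons `k_Pl`. -/
noncomputable def kPl {Θ : Type*} [Fintype Θ] [DecidableEq Θ] (m : Finset Θ → ℝ) : ℝ :=
  ∑ x : Θ, Pl m {x}

/-- `β[Bel] = (1 - k_Bel)/(k_Pl - k_Bel)`. -/
noncomputable def betaBel {Θ : Type*} [Fintype Θ] [DecidableEq Θ] (m : Finset Θ → ℝ) : ℝ :=
  (1 - kBel m) / (kPl m - kBel m)

/-- The intersection probability `p[Bel](x) = m(x) + β[Bel]⬝(Pl(x) - m(x))`. -/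
noncomputable def pInt {Θ : Type*} [Fintype Θ] [DecidableEq Θ] (m : Finset Θ → ℝ)
    (x : Θ) : ℝ :=
  m {x} + betaBel m * (Pl m {x} - m {x})

/-- Vertex `t¹_x` of the lower simplex. -/
noncomputable def lowerVertex {Θ : Type*} [Fintype Θ] [DecidableEq Θ]
    (m : Finset Θ → ℝ) (x : Θ) : Θ → ℝ :=
  fun y => if y = x then m {y} + 1 - kBel m else m {y}

/-- Vertex `t^{n-1}_x` of the upper simplex. -/
noncomputable def upperVertex {Θ : Type*} [Fintype Θ] [DecidableEq Θ]
    (m : Finset Θ → ℝ) (x : Θ) : Θ → ℝ :=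
  fun y => if y = x then Pl m {y} + 1 - kPl m else Pl m {y}

/-- Proposition 3: the intersection probability is the convex combination,
with coefficient `β[Bel]`, of the barycentres of the lower and upper simplices. -/
theorem pInt_convex_combination_of_barycentres
    {Θ : Type*} [Fintype Θ] [DecidableEq Θ] [Nonempty Θ]
    (m : Finset Θ → ℝ) (hm : IsBPA m) (h1 : kBel m < 1) :
    ∀ y : Θ,
      pInt m y =
        betaBel m * ((1 / (Fintype.card Θ : ℝ)) * ∑ x : Θ, upperVertex m x y) +
          (1 - betaBel m) * ((1 / (Fintype.card Θ : ℝ)) * ∑ x : Θ, lowerVertex m x y) := by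
  intro y
  obtain ⟨h0, hnn, hsum⟩ := hm
  have hn : (Fintype.card Θ : ℝ) ≠ 0 := Nat.cast_ne_zero.mpr Fintype.card_ne_zero
  have hkPl : kPl m = ∑ B : Finset Θ, m B * B.card := by
    unfold kPl Pl
    simp only [Finset.sum_filter]
    rw [Finset.sum_comm]
    apply Finset.sum_congr rfl
    intro B _
    have h : ∀ x : Θ, (if B ∩ {x} ≠ ∅ then m B else 0) = if x ∈ B then m B else 0 := by
      intro x
      congr 1
      simp [Finset.eq_empty_iff_forall_notMem, eq_iff_iff]
    simp only [h, Finset.sum_ite_mem, Finset.univ_inter, Finset.sum_const, nsmul_eq_mul]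
    ring
  have hkPl1 : 1 ≤ kPl m := by
    rw [hkPl, ← hsum]
    apply Finset.sum_le_sum
    intro B _
    by_cases hB : B = ∅
    · simp [hB, h0]
    · have : 1 ≤ (B.card : ℝ) := by
        exact_mod_cast Nat.one_le_iff_ne_zero.mpr (fun h => hB (Finset.card_eq_zero.mp h))
      nlinarith [hnn B]
  have hne : kPl m - kBel m ≠ 0 := by nlinarith
  have hβ : betaBel m * (kPl m - kBel m) = 1 - kBel m := by
    unfold betaBel
    field_simp
  have hlow : ∑ x : Θ, lowerVertex m x y = (Fintype.card Θ : ℝ) * m {y} + (1 - kBel m) := by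
    unfold lowerVertex
    have h : ∀ x : Θ, (if y = x then m {y} + 1 - kBel m else m {y}) = m {y} + (if y = x then 1 - kBel m else 0) := by
      intro x; by_cases h : y = x <;> simp [h] <;> ring
    simp only [h, Finset.sum_add_distrib, Finset.sum_ite_eq, Finset.mem_univ, if_true,
      Finset.sum_const, Finset.card_univ, nsmul_eq_mul]
  have hup : ∑ x : Θ, upperVertex m x y = (Fintype.card Θ : ℝ) * Pl m {y} + (1 - kPl m) := by
    unfold upperVertex
    have h : ∀ x : Θ, (if y = x then Pl m {y} + 1 - kPl m else Pl m {y}) = Pl m {y} + (if y = x then 1 - kPl m else 0) := by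
      intro x; by_cases h : y = x <;> simp [h] <;> ring
    simp only [h, Finset.sum_add_distrib, Finset.sum_ite_eq, Finset.mem_univ, if_true,
      Finset.sum_const, Finset.card_univ, nsmul_eq_mul]
  rw [hlow, hup]
  unfold pInt
  field_simp
  linear_combination hβ
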